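/- The 5×5 companion-type matrix A^(j) (with first four rows the shift pattern e₂, e₃, e₄, e₅ and last row (A₅₁, A₅₂, A₅₃, A₅₄, A₅₅) as given) has characteristic polynomial p(λ) = Π_{m=1}^{5} (λ − v_j − c_m Δv) for five distinct real constants c₁,…,c₅ (the rescaled Gauss-Legendre nodes), and in particular A^(j) has five distinct real eigenvalues and is diagonalizable over ℝ. -/

import Mathlib

open Polynomial Matrix

/-- The flux Jacobian `A^(j)` of the 5-moment band system. -/
noncomputable def bandMatrix (Δv vj : ℝ) : Matrix (Fin 5) (Fin 5) ℝ :=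
  Matrix.of
    ![![0, 1, 0, 0, 0],
      ![0, 0, 1, 0, 0],
      ![0, 0, 0, 1, 0],
      ![0, 0, 0, 0, 1],
      ![5*Δv^4*vj/336 - 5*Δv^2*vj^3/18 + vj^5,
        -5*Δv^4/336 + 5*Δv^2*vj^2/6 - 5*vj^4,
        -5*Δv^2*vj/6 + 10*vj^3,
        (5/18) * (Δv^2 - 36*vj^2),
        5*vj]]

set_option maxHeartbeats 800000 in
private lemma compdet (x p q r t u : ℝ) :
    (Matrix.of
      ![![x, -1, 0, 0, 0],
        ![0, x, -1, 0, 0],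
        ![0, 0, x, -1, 0],
        ![0, 0, 0, x, -1],
        ![p, q, r, t, u]]).det
      = x^4*u + x^3*t + x^2*r + x*q + p := by
  simp [Matrix.det_succ_row_zero, Fin.sum_univ_succ, Fin.succAbove]
  ring


set_option maxHeartbeats 1000000 in
/-- There exist five distinct real constants `c₁ < ⋯ < c₅` (the rescaled
Gauss–Legendre nodes) such that for every band (any `Δv > 0`, `vj ∈ ℝ`)
the characteristic polynomial of `A^(j)` is `∏ₘ (λ − vⱼ − cₘ Δv)`; in
particular `A^(j)` has five distinct real eigenvalues and is diagonalizable
over ℝ. -/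
theorem stmt_2 :
    ∃ c : Fin 5 → ℝ, StrictMono c ∧
      ∀ (Δv vj : ℝ), 0 < Δv →
        ((bandMatrix Δv vj).charpoly
            = ∏ m : Fin 5, (X - C (vj + c m * Δv))) ∧
        (Function.Injective (fun m : Fin 5 => vj + c m * Δv)) ∧
        ∃ R : Matrix (Fin 5) (Fin 5) ℝ, IsUnit R.det ∧
          R⁻¹ * bandMatrix Δv vj * R
            = Matrix.diagonal (fun m : Fin 5 => vj + c m * Δv) := by
  have hs0 : (0:ℝ) ≤ Real.sqrt 70 := Real.sqrt_nonneg _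
  set s : ℝ := Real.sqrt 70 with hs_def
  have hs : s^2 = 70 := Real.sq_sqrt (by norm_num)
  have hs_lt : s < 9 := by nlinarith
  have hs_pos : 0 < s := by nlinarith
  set a : ℝ := Real.sqrt (5/36 + s/126) with ha_def
  set b : ℝ := Real.sqrt (5/36 - s/126) with hb_def
  have ha : a^2 = 5/36 + s/126 := Real.sq_sqrt (by linarith)
  have hb : b^2 = 5/36 - s/126 := Real.sq_sqrt (by linarith)
  have hb_pos : 0 < b := Real.sqrt_pos.mpr (by linarith)
  have ha_pos : 0 < a := Real.sqrt_pos.mpr (by linarith)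
  have hba : b < a := by nlinarith
  have hab2 : a^2 + b^2 = 5/18 := by linear_combination ha + hb
  have habp : a^2 * b^2 = 5/336 := by
    linear_combination b^2 * ha + (5/36 + s/126) * hb - (1/15876) * hs
  have hcmono : StrictMono (![-a, -b, 0, b, a] : Fin 5 → ℝ) := by
    intro i j hij
    fin_cases i <;> fin_cases j <;> simp_all [-Real.sqrt_pos] <;> linarith
  refine ⟨![-a, -b, 0, b, a], hcmono, ?_⟩
  intro Δv vj hΔv
  have hlmono : StrictMono (fun m : Fin 5 => vj + ![-a, -b, 0, b, a] m * Δv) :=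
    fun i j hij => add_lt_add_right (mul_lt_mul_of_pos_right (hcmono hij) hΔv) vj
  have hquint : ∀ t : ℝ, t^5 - (5/18)*t^3 + (5/336)*t = 0 →
      (vj + t*Δv)^5
        = (5*Δv^4*vj/336 - 5*Δv^2*vj^3/18 + vj^5)
          + (-5*Δv^4/336 + 5*Δv^2*vj^2/6 - 5*vj^4) * (vj + t*Δv)
          + (-5*Δv^2*vj/6 + 10*vj^3) * (vj + t*Δv)^2
          + ((5/18)*(Δv^2 - 36*vj^2)) * (vj + t*Δv)^3
          + 5*vj*(vj + t*Δv)^4 := by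
    intro t ht
    linear_combination Δv^5 * ht
  have hqa : a^5 - (5/18)*a^3 + (5/336)*a = 0 := by
    linear_combination (a^3 + (5/36 + s/126)*a - (5/18)*a) * ha + (a/15876) * hs
  have hqb : b^5 - (5/18)*b^3 + (5/336)*b = 0 := by
    linear_combination (b^3 + (5/36 - s/126)*b - (5/18)*b) * hb + (b/15876) * hs
  have hqa' : (-a)^5 - (5/18)*(-a)^3 + (5/336)*(-a) = 0 := by linear_combination -hqa
  have hqb' : (-b)^5 - (5/18)*(-b)^3 + (5/336)*(-b) = 0 := by linear_combination -hqb
  have hq0 : (0:ℝ)^5 - (5/18)*(0:ℝ)^3 + (5/336)*(0:ℝ) = 0 := by ring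
  have hroot : ∀ m : Fin 5, (vj + ![-a, -b, 0, b, a] m * Δv)^5
      = (5*Δv^4*vj/336 - 5*Δv^2*vj^3/18 + vj^5)
        + (-5*Δv^4/336 + 5*Δv^2*vj^2/6 - 5*vj^4) * (vj + ![-a, -b, 0, b, a] m * Δv)
        + (-5*Δv^2*vj/6 + 10*vj^3) * (vj + ![-a, -b, 0, b, a] m * Δv)^2
        + ((5/18)*(Δv^2 - 36*vj^2)) * (vj + ![-a, -b, 0, b, a] m * Δv)^3
        + 5*vj*(vj + ![-a, -b, 0, b, a] m * Δv)^4 := by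
    intro m
    fin_cases m <;> simp <;>
      first
        | linear_combination hquint (-a) hqa'
        | linear_combination hquint (-b) hqb'
        | linear_combination hquint 0 hq0
        | linear_combination hquint b hqb
        | linear_combination hquint a hqa
  refine ⟨?_, hlmono.injective, ?_⟩
  · -- charpoly
    apply Polynomial.funext
    intro x
    rw [eval_prod, Fin.prod_univ_five]
    simp only [eval_sub, eval_X, eval_C]
    rw [Matrix.charpoly, ← coe_evalRingHom, RingHom.map_det]
    have hmap : (evalRingHom x).mapMatrix (charmatrix (bandMatrix Δv vj))
        = Matrix.of
          ![![x, -1, 0, 0, 0],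
            ![0, x, -1, 0, 0],
            ![0, 0, x, -1, 0],
            ![0, 0, 0, x, -1],
            ![-(5*Δv^4*vj/336 - 5*Δv^2*vj^3/18 + vj^5),
              -(-5*Δv^4/336 + 5*Δv^2*vj^2/6 - 5*vj^4),
              -(-5*Δv^2*vj/6 + 10*vj^3),
              -((5/18) * (Δv^2 - 36*vj^2)),
              x - 5*vj]] := by
      ext i j
      fin_cases i <;> fin_cases j <;>
        simp [RingHom.mapMatrix_apply, charmatrix, bandMatrix]
    rw [hmap, compdet]
    simp only [Matrix.cons_val_zero, Matrix.cons_val_one, Matrix.head_cons,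
      Matrix.cons_val_two, Matrix.tail_cons, Matrix.cons_val_three, Matrix.cons_val_four]
    linear_combination (Δv^2*(x-vj)^3) * hab2 - (Δv^4*(x-vj)) * habp
  · refine ⟨(Matrix.vandermonde (fun m : Fin 5 => vj + ![-a, -b, 0, b, a] m * Δv))ᵀ, ?_, ?_⟩
    · rw [Matrix.det_transpose, Matrix.det_vandermonde]
      refine isUnit_iff_ne_zero.mpr (Finset.prod_ne_zero_iff.mpr fun i _ =>
        Finset.prod_ne_zero_iff.mpr fun j hj => ?_)
      have := hlmono (Finset.mem_Ioi.mp hj)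
      simp only at this ⊢
      linarith
    · have hdet : IsUnit ((Matrix.vandermonde
          (fun m : Fin 5 => vj + ![-a, -b, 0, b, a] m * Δv))ᵀ).det := by
        rw [Matrix.det_transpose, Matrix.det_vandermonde]
        refine isUnit_iff_ne_zero.mpr (Finset.prod_ne_zero_iff.mpr fun i _ =>
          Finset.prod_ne_zero_iff.mpr fun j hj => ?_)
        have := hlmono (Finset.mem_Ioi.mp hj)
        simp only at this ⊢
        linarith
      have hMR : bandMatrix Δv vj
            * (Matrix.vandermonde (fun m : Fin 5 => vj + ![-a, -b, 0, b, a] m * Δv))ᵀ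
          = (Matrix.vandermonde (fun m : Fin 5 => vj + ![-a, -b, 0, b, a] m * Δv))ᵀ
            * Matrix.diagonal (fun m : Fin 5 => vj + ![-a, -b, 0, b, a] m * Δv) := by
        ext i k
        rw [Matrix.mul_diagonal, Matrix.mul_apply, Fin.sum_univ_five]
        fin_cases i <;> fin_cases k <;>
          simp [bandMatrix, Matrix.vandermonde, Matrix.transpose_apply,
            show ((0:Fin 5):ℕ)=0 from rfl, show ((1:Fin 5):ℕ)=1 from rfl,
            show ((2:Fin 5):ℕ)=2 from rfl, show ((3:Fin 5):ℕ)=3 from rfl,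
            show ((4:Fin 5):ℕ)=4 from rfl]
        all_goals try ring
        · linear_combination Δv^5 * hqa
        · linear_combination Δv^5 * hqb
        · linear_combination -(Δv^5 * hqb)
        · linear_combination -(Δv^5 * hqa)
      rw [mul_assoc, hMR, ← mul_assoc, Matrix.nonsing_inv_mul _ hdet, one_mul]
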